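/- For fixed positive integers n and p, the polynomial identity ∑_{k=0}^{⌊n/2⌋} (S(p,k)/2) C(n,2k) z^k = C(2p-1,p) * ₂F₁(-n/2, (1-n)/2; p+1; 4z) holds, where ₂F₁ is the Gauss hypergeometric series (a terminating polynomial in z here) and S(p,k) = C(2p,p)C(2k,k)/C(p+k,p). -/

import Mathlib

/-- The Pochhammer symbol (ascending factorial) `(a)_k = a(a+1)⋯(a+k-1)`. -/
noncomputable def poch (a : ℝ) (k : ℕ) : ℝ := ∏ i ∈ Finset.range k, (a + i)

/-- The super Catalan number `S(p,k)` as a rational number. -/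
def superCatalan (p k : ℕ) : ℚ :=
  (((2 * p).choose p : ℚ) * ((2 * k).choose k : ℚ)) / ((p + k).choose p : ℚ)

lemma poch_succ (a : ℝ) (k : ℕ) : poch a (k + 1) = poch a k * (a + k) :=
  Finset.prod_range_succ _ _

lemma poch_dup (a : ℝ) (k : ℕ) :
    4 ^ k * (poch a k * poch (a + 1/2) k) = poch (2 * a) (2 * k) := by
  induction k with
  | zero => simp [poch]
  | succ k ih =>
    have h2 : 2 * (k + 1) = 2 * k + 1 + 1 := by ring
    rw [h2, poch_succ, poch_succ, poch_succ, poch_succ]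
    push_cast
    linear_combination (4 * (a + (k:ℝ)) * (a + 1/2 + k)) * ih

lemma poch_neg (n m : ℕ) (h : m ≤ n) :
    poch (-(n : ℝ)) m = (-1) ^ m * (n.descFactorial m : ℝ) := by
  induction m with
  | zero => simp [poch]
  | succ m ih =>
    have hm : m ≤ n := Nat.le_of_succ_le h
    rw [poch_succ, ih hm, Nat.descFactorial_succ]
    push_cast [Nat.cast_sub hm]
    ring

lemma poch_nat (p k : ℕ) :
    poch ((p : ℝ) + 1) k * (p.factorial : ℝ) = ((p + k).factorial : ℝ) := by
  induction k with
  | zero => simp [poch]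
  | succ k ih =>
    rw [poch_succ]
    have : p + (k + 1) = (p + k) + 1 := by ring
    rw [this, Nat.factorial_succ]
    push_cast
    linear_combination ((p:ℝ) + 1 + k) * ih

theorem Qnp_eq_hypergeometric (n p : ℕ) (hn : 0 < n) (hp : 0 < p) (z : ℝ) :
    ∑ k ∈ Finset.range (n / 2 + 1),
        ((superCatalan p k / 2 : ℚ) : ℝ) * ((n.choose (2 * k) : ℝ)) * z ^ k =
      ((2 * p - 1).choose p : ℝ) *
        ∑ k ∈ Finset.range (n / 2 + 1),
          poch (-(n : ℝ) / 2) k * poch ((1 - (n : ℝ)) / 2) k /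
            (poch ((p : ℝ) + 1) k * (k.factorial : ℝ)) * (4 * z) ^ k := by
  rw [Finset.mul_sum]
  apply Finset.sum_congr rfl
  intro k hk
  have hkn : 2 * k ≤ n := by
    have := Finset.mem_range.mp hk; omega
  have hf : ∀ m : ℕ, ((m.factorial : ℝ)) ≠ 0 := fun m => by positivity
  have h4k : (4:ℝ) ^ k ≠ 0 := by positivity
  -- hypergeometric numerator
  have hdup : (4:ℝ) ^ k * (poch (-(n : ℝ) / 2) k * poch ((1 - (n : ℝ)) / 2) k)
      = poch (-(n:ℝ)) (2 * k) := by
    have h1 : (1 - (n : ℝ)) / 2 = -(n:ℝ)/2 + 1/2 := by ring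
    have h2 : 2 * (-(n:ℝ)/2) = -(n:ℝ) := by ring
    rw [h1, poch_dup, h2]
  have hneg : poch (-(n:ℝ)) (2 * k) = (((2*k).factorial : ℝ)) * (n.choose (2*k) : ℝ) := by
    rw [poch_neg n (2*k) hkn, pow_mul]
    norm_num
    rw [Nat.descFactorial_eq_factorial_mul_choose]
    push_cast; ring
  have e1 : poch (-(n : ℝ) / 2) k * poch ((1 - (n : ℝ)) / 2) k
      = (((2*k).factorial : ℝ)) * (n.choose (2*k) : ℝ) / 4 ^ k := by
    rw [eq_div_iff h4k]
    linear_combination hdup + hneg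
  -- choose facts as real equalities
  have h1 : ((2*p).choose p : ℝ) = ((2*p).factorial : ℝ) / ((p.factorial : ℝ) * (p.factorial : ℝ)) := by
    rw [eq_div_iff (by positivity)]
    have := Nat.choose_mul_factorial_mul_factorial (show p ≤ 2*p by omega)
    have h' : 2*p - p = p := by omega
    rw [h'] at this
    push_cast [← this]; ring
  have h2 : ((2*k).choose k : ℝ) = ((2*k).factorial : ℝ) / ((k.factorial : ℝ) * (k.factorial : ℝ)) := by
    rw [eq_div_iff (by positivity)]
    have := Nat.choose_mul_factorial_mul_factorial (show k ≤ 2*k by omega)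
    have h' : 2*k - k = k := by omega
    rw [h'] at this
    push_cast [← this]; ring
  have h3 : (((p+k).choose p : ℝ)) = ((p+k).factorial : ℝ) / ((p.factorial : ℝ) * (k.factorial : ℝ)) := by
    rw [eq_div_iff (by positivity)]
    have := Nat.choose_mul_factorial_mul_factorial (show p ≤ p+k by omega)
    have h' : p + k - p = k := by omega
    rw [h'] at this
    push_cast [← this]; ring
  have hsym : (2*p-1).choose p = (2*p-1).choose (p-1) := by
    have h := Nat.choose_symm (show p-1 ≤ 2*p-1 by omega)
    have h' : 2*p-1-(p-1) = p := by omega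
    rw [h'] at h
    exact h
  have hc : (2*p).choose p = 2 * ((2*p-1).choose p) := by
    have := Nat.choose_succ_succ (2*p-1) (p-1)
    simp only [Nat.succ_eq_add_one] at this
    have e : (2*p-1)+1 = 2*p := by omega
    have e2 : (p-1)+1 = p := by omega
    rw [e, e2] at this
    omega
  have h4 : ((2*p-1).choose p : ℝ) = ((2*p).factorial : ℝ) / (2 * (p.factorial : ℝ) * (p.factorial : ℝ)) := by
    rw [eq_div_iff (by positivity)]
    have : ((2*p).choose p : ℝ) = 2 * ((2*p-1).choose p : ℝ) := by exact_mod_cast congrArg (Nat.cast : ℕ → ℝ) hc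
    rw [h1] at this
    field_simp at this
    linarith [this]
  have h5 : poch ((p : ℝ) + 1) k = ((p+k).factorial : ℝ) / (p.factorial : ℝ) := by
    rw [eq_div_iff (hf p)]; exact poch_nat p k
  rw [superCatalan]
  push_cast
  rw [e1, h5, h1, h2, h3, h4, mul_pow]
  field_simp
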